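/- Let n ≥ 0 be an integer, ε > 0, η ∈ (0,1), and let ρ₁, …, ρₙ ∈ ℂ. Define S = {z ∈ ℂ : ∏_{j=1}^n |z - ρⱼ| < (ηε/e)^n}. Then by Cartan's lemma applied with H = ηε, the set S is contained in a union of disks with radii summing to at most 2ηε, and hence the Lebesgue measure of S is at most 4π η² ε². -/

import Mathlib

open Metric MeasureTheory Finset

/-- Greedy Cartan construction: for any finite index set `T`, there are disks with
centers `c i` and "weights" `p i` summing to `T.card` such that any point `z`
far from all disks (distance `≥ 2 * p i * L` from `c i`) has at most `k` of the
points `ρ j`, `j ∈ T`, within distance `(k+1) * L`. -/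
lemma cartan_rec {n : ℕ} (ρ : Fin n → ℂ) {L : ℝ} (hL : 0 < L) :
    ∀ N (T : Finset (Fin n)), T.card ≤ N →
      ∃ (m : ℕ) (c : Fin m → ℂ) (p : Fin m → ℕ),
        (∀ i, 1 ≤ p i) ∧ (∑ i, p i) = T.card ∧
        ∀ z : ℂ, (∀ i, 2 * p i * L ≤ dist z (c i)) →
          ∀ k : ℕ, (T.filter fun j => dist z (ρ j) < (k + 1) * L).card ≤ k := by
  classical
  intro N
  induction N with
  | zero =>
    intro T hT
    have hTe : T = ∅ := Finset.card_eq_zero.mp (Nat.le_zero.mp hT)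
    exact ⟨0, Fin.elim0, Fin.elim0, fun i => i.elim0, by simp [hTe],
      fun z _ k => by simp [hTe]⟩
  | succ N ih =>
    intro T hT
    rcases eq_or_ne T ∅ with hTe | hTne
    · exact ⟨0, Fin.elim0, Fin.elim0, fun i => i.elim0, by simp [hTe],
        fun z _ k => by simp [hTe]⟩
    have hTne' : T.Nonempty := Finset.nonempty_iff_ne_empty.mpr hTne
    -- the "heaviness" predicate
    set Q : ℕ → Prop := fun q => ∃ c : ℂ,
      q ≤ (T.filter fun j => dist (ρ j) c ≤ q * L).card with hQdef
    have hQcard : ∀ q, Q q → q ≤ T.card := by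
      rintro q ⟨c, hc⟩
      exact hc.trans (Finset.card_le_card (Finset.filter_subset _ _))
    obtain ⟨j₀, hj₀⟩ := hTne'
    have hT1 : 1 ≤ T.card := Finset.one_le_card.mpr ⟨j₀, hj₀⟩
    have hQ1 : Q 1 := by
      refine ⟨ρ j₀, ?_⟩
      rw [Finset.one_le_card]
      exact ⟨j₀, Finset.mem_filter.mpr ⟨hj₀, by simp [hL.le]⟩⟩
    set p₀ : ℕ := Nat.findGreatest Q T.card with hp₀def
    have hp₀1 : 1 ≤ p₀ := Nat.le_findGreatest hT1 hQ1
    have hQp₀ : Q p₀ := Nat.findGreatest_spec hT1 hQ1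
    have hmax : ∀ q, Q q → q ≤ p₀ := fun q hq => Nat.le_findGreatest (hQcard q hq) hq
    obtain ⟨c₀, hc₀⟩ := hQp₀
    set D : Finset (Fin n) := T.filter fun j => dist (ρ j) c₀ ≤ p₀ * L with hDdef
    have hDsub : D ⊆ T := Finset.filter_subset _ _
    have hDcard : D.card = p₀ := by
      refine le_antisymm ?_ hc₀
      refine hmax D.card ⟨c₀, Finset.card_le_card ?_⟩
      intro j hj
      rw [Finset.mem_filter] at hj ⊢
      refine ⟨hj.1, hj.2.trans ?_⟩
      have : (p₀ : ℝ) ≤ D.card := by exact_mod_cast hc₀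
      nlinarith [hL.le]
    set T' : Finset (Fin n) := T \ D with hT'def
    have hT'card : T'.card = T.card - p₀ := by
      rw [Finset.card_sdiff_of_subset hDsub, hDcard]
    have hT'le : T'.card ≤ N := by
      rw [hT'card]
      omega
    obtain ⟨m, c, p, hp1, hsum, hcount⟩ := ih T' hT'le
    refine ⟨m + 1, Fin.cons c₀ c, Fin.cons p₀ p, ?_, ?_, ?_⟩
    · intro i
      refine Fin.cases ?_ ?_ i
      · exact hp₀1
      · exact hp1
    · rw [Fin.sum_cons, hsum, hT'card]
      have : p₀ ≤ T.card := hDcard ▸ Finset.card_le_card hDsub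
      omega
    · intro z hz k
      have hz0 : 2 * (p₀ : ℝ) * L ≤ dist z c₀ := by simpa using hz 0
      have hztail : ∀ i, 2 * (p i : ℝ) * L ≤ dist z (c i) := fun i => by
        simpa using hz i.succ
      by_cases hk : k + 1 ≤ p₀
      · -- points of D are far from z, so the filter lives inside T'
        have hsubset : (T.filter fun j => dist z (ρ j) < (k + 1) * L) ⊆
            T'.filter fun j => dist z (ρ j) < (k + 1) * L := by
          intro j hj
          rw [Finset.mem_filter] at hj
          rw [Finset.mem_filter, hT'def, Finset.mem_sdiff]
          refine ⟨⟨hj.1, fun hjD => ?_⟩, hj.2⟩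
          rw [hDdef, Finset.mem_filter] at hjD
          have h1 : dist z c₀ ≤ dist z (ρ j) + dist (ρ j) c₀ := dist_triangle _ _ _
          have h2 : ((k : ℝ) + 1) * L ≤ (p₀ : ℝ) * L := by
            have : ((k : ℝ) + 1) ≤ (p₀ : ℝ) := by exact_mod_cast hk
            nlinarith [hL.le]
          nlinarith [hj.2, hjD.2]
        exact (Finset.card_le_card hsubset).trans (hcount z hztail k)
      · -- otherwise maximality of p₀ prevents k+1 points near z
        push_neg at hk
        by_contra hcard
        push_neg at hcard
        have : Q (k + 1) := by
          refine ⟨z, ?_⟩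
          refine le_trans hcard (Finset.card_le_card ?_)
          intro j hj
          rw [Finset.mem_filter] at hj ⊢
          refine ⟨hj.1, ?_⟩
          rw [dist_comm]
          push_cast
          exact hj.2.le
        exact absurd (hmax _ this) (by omega)

/-- If at most `k` values of `f` are below `(k+1) * L` for every `k`, then the product
of all the values is at least `n! * L^n`. -/
lemma prod_ge_factorial {n : ℕ} {L : ℝ} (hL : 0 < L) (f : Fin n → ℝ)
    (hf : ∀ j, 0 ≤ f j)
    (hcount : ∀ k : ℕ, ((univ : Finset (Fin n)).filter fun j => f j < (k + 1) * L).card ≤ k) :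
    (n.factorial : ℝ) * L ^ n ≤ ∏ j, f j := by
  classical
  set σ := Tuple.sort f with hσ
  have hmono := Tuple.monotone_sort f
  have key : ∀ i : Fin n, ((i : ℕ) + 1) * L ≤ f (σ i) := by
    intro i
    by_contra h
    push_neg at h
    have himg : (Finset.Iic i).image σ ⊆
        (univ : Finset (Fin n)).filter fun j => f j < ((i : ℕ) + 1) * L := by
      intro j hj
      obtain ⟨j', hj', rfl⟩ := Finset.mem_image.mp hj
      rw [Finset.mem_filter]
      refine ⟨Finset.mem_univ _, lt_of_le_of_lt ?_ h⟩
      exact hmono (Finset.mem_Iic.mp hj')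
    have hcard : ((Finset.Iic i).image σ).card = (i : ℕ) + 1 := by
      rw [Finset.card_image_of_injective _ σ.injective, Fin.card_Iic]
    have := (hcard ▸ Finset.card_le_card himg).trans (hcount i)
    omega
  have h1 : ∏ j, f j = ∏ i, f (σ i) := (Equiv.prod_comp σ f).symm
  rw [h1]
  calc (n.factorial : ℝ) * L ^ n = ∏ i : Fin n, (((i : ℕ) : ℝ) + 1) * L := by
        rw [Finset.prod_mul_distrib, Finset.prod_const, Finset.card_univ, Fintype.card_fin]
        congr 1
        rw [Fin.prod_univ_eq_prod_range (fun i => ((i : ℝ) + 1))]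
        rw_mod_cast [Finset.prod_range_add_one_eq_factorial]
    _ ≤ ∏ i, f (σ i) := by
        refine Finset.prod_le_prod (fun i _ => by positivity) fun i _ => key i

theorem stmt_19 (n : ℕ) (ε η : ℝ) (hε : 0 < ε) (hη : η ∈ Set.Ioo (0 : ℝ) 1)
    (ρ : Fin n → ℂ) :
    (∃ (m : ℕ) (c : Fin m → ℂ) (r : Fin m → ℝ),
      (∀ j, 0 ≤ r j) ∧ (∑ j, r j) ≤ 2 * η * ε ∧
      {z : ℂ | ∏ j, ‖z - ρ j‖ < (η * ε / Real.exp 1) ^ n} ⊆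
        ⋃ j, ball (c j) (r j)) ∧
    volume {z : ℂ | ∏ j, ‖z - ρ j‖ < (η * ε / Real.exp 1) ^ n} ≤
      ENNReal.ofReal (4 * Real.pi * η ^ 2 * ε ^ 2) := by
  classical
  obtain ⟨hη0, hη1⟩ := hη
  rcases Nat.eq_zero_or_pos n with hn | hn
  · subst hn
    have hS : {z : ℂ | ∏ j, ‖z - ρ j‖ < (η * ε / Real.exp 1) ^ 0} = ∅ := by
      ext z; simp
    refine ⟨⟨0, Fin.elim0, Fin.elim0, fun i => i.elim0, ?_, by simp [hS]⟩, ?_⟩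
    · simp only [Finset.univ_eq_empty, Finset.sum_empty]
      positivity
    · rw [hS]
      simp
  -- main case: n ≥ 1
  have hn0 : (0 : ℝ) < n := by exact_mod_cast hn
  set L : ℝ := η * ε / n with hLdef
  have hL : 0 < L := by positivity
  obtain ⟨m, c, p, hp1, hsum, hcount⟩ :=
    cartan_rec ρ hL n (univ : Finset (Fin n)) (by simp)
  have hsumn : ∑ i, (p i : ℝ) = (n : ℝ) := by
    rw [← Nat.cast_sum]
    norm_cast
    simpa using hsum
  have hHL : η * ε = (n : ℝ) * L := by
    rw [hLdef]
    field_simp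
  have hrsum : ∑ i, 2 * (p i : ℝ) * L = 2 * η * ε := by
    rw [← Finset.sum_mul, ← Finset.mul_sum, hsumn, hLdef]
    field_simp
  -- factorial bound
  have hfact : ((n : ℝ) / Real.exp 1) ^ n ≤ (n.factorial : ℝ) := by
    have h1 : (n : ℝ) ^ n / (n.factorial : ℝ) ≤ Real.exp n :=
      Real.pow_div_factorial_le_exp (n : ℝ) (Nat.cast_nonneg n) n
    have h2 : Real.exp (n : ℝ) = Real.exp 1 ^ n := by
      rw [← Real.exp_nat_mul, mul_one]
    have hfpos : (0 : ℝ) < (n.factorial : ℝ) := by exact_mod_cast n.factorial_pos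
    have hepos : (0 : ℝ) < Real.exp 1 ^ n := by positivity
    rw [div_pow, div_le_iff₀ hepos]
    rw [div_le_iff₀ hfpos, h2] at h1
    nlinarith
  have hkey : (η * ε / Real.exp 1) ^ n ≤ (n.factorial : ℝ) * L ^ n := by
    rw [hHL]
    have h3 : (n : ℝ) * L / Real.exp 1 = ((n : ℝ) / Real.exp 1) * L := by ring
    rw [h3, mul_pow]
    exact mul_le_mul_of_nonneg_right hfact (by positivity)
  -- the covering
  have hsub : {z : ℂ | ∏ j, ‖z - ρ j‖ < (η * ε / Real.exp 1) ^ n} ⊆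
      ⋃ i, ball (c i) (2 * (p i : ℝ) * L) := by
    intro z hz
    simp only [Set.mem_setOf_eq] at hz
    by_contra hzB
    simp only [Set.mem_iUnion, Metric.mem_ball, not_exists, not_lt] at hzB
    have hc := hcount z hzB
    have hprod := prod_ge_factorial hL (fun j => dist z (ρ j))
      (fun j => dist_nonneg) hc
    have heq : ∏ j, dist z (ρ j) = ∏ j, ‖z - ρ j‖ := by
      simp [Complex.dist_eq]
    rw [heq] at hprod
    linarith [hkey.trans hprod]
  refine ⟨⟨m, c, fun i => 2 * (p i : ℝ) * L, fun i => by positivity, le_of_eq hrsum, hsub⟩, ?_⟩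
  -- measure bound
  calc volume {z : ℂ | ∏ j, ‖z - ρ j‖ < (η * ε / Real.exp 1) ^ n}
      ≤ volume (⋃ i, ball (c i) (2 * (p i : ℝ) * L)) := measure_mono hsub
    _ ≤ ∑' i, volume (ball (c i) (2 * (p i : ℝ) * L)) := measure_iUnion_le _
    _ = ∑ i, volume (ball (c i) (2 * (p i : ℝ) * L)) := tsum_fintype _
    _ = ∑ i, ENNReal.ofReal ((2 * (p i : ℝ) * L) ^ 2 * Real.pi) := by
        refine Finset.sum_congr rfl fun i _ => ?_
        rw [Complex.volume_ball, ← ENNReal.ofReal_pow (by positivity),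
          ENNReal.ofReal_mul (by positivity)]
        congr 1
        rw [← NNReal.coe_real_pi, ENNReal.ofReal_coe_nnreal]
    _ ≤ ENNReal.ofReal (4 * Real.pi * η ^ 2 * ε ^ 2) := by
        rw [← ENNReal.ofReal_sum_of_nonneg (fun i _ => by positivity)]
        apply ENNReal.ofReal_le_ofReal
        have h4 : ∑ i, (2 * (p i : ℝ) * L) ^ 2 ≤ (∑ i, 2 * (p i : ℝ) * L) ^ 2 :=
          Finset.sum_sq_le_sq_sum_of_nonneg (fun i _ => by positivity)
        rw [← Finset.sum_mul]
        rw [hrsum] at h4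
        nlinarith [Real.pi_nonneg, Real.pi_pos]
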